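/- For any real numbers x and y with 1 ≤ y ≤ x, ∑_{n≤x} ω(n) = ∑_{p≤y} ⌊x/p⌋ + ∑_{n≤x/y} π(x/n) − ⌊x/y⌋·π(y), where the first sum on the right runs over primes p ≤ y. -/

import Mathlib

open Real Filter Finset

/-- The number of distinct prime divisors of `n`, usually denoted `ω(n)`. -/
def smallOmega (n : ℕ) : ℕ := n.primeFactors.card

/-- The total number of prime divisors of `n` counted with multiplicity, `Ω(n)`. -/
def bigOmega (n : ℕ) : ℕ := n.primeFactorsList.length

/-- The Meissel–Mertens constant `M = γ + ∑_p (log(1 - 1/p) + 1/p)`. -/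
noncomputable def mertensM : ℝ :=
  Real.eulerMascheroniConstant +
    ∑' p : Nat.Primes, (Real.log (1 - 1 / ((p : ℕ) : ℝ)) + 1 / ((p : ℕ) : ℝ))

/-- The constant `M'' = ∑_p 1/(p(p-1))`. -/
noncomputable def mertensM'' : ℝ :=
  ∑' p : Nat.Primes, 1 / (((p : ℕ) : ℝ) * (((p : ℕ) : ℝ) - 1))

/-- The constant `M' = M + M''`. -/
noncomputable def mertensM' : ℝ := mertensM + mertensM''

/-- The prime counting function `π(x)` for a real argument. -/
noncomputable def primePi (x : ℝ) : ℕ := Nat.primeCounting ⌊x⌋₊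

/-- The logarithmic integral `li(x) = ∫_0^x dt / log t`, as a Cauchy principal value. -/
noncomputable def li (x : ℝ) : ℝ :=
  limUnder (nhdsWithin (0 : ℝ) (Set.Ioi 0)) (fun ε : ℝ =>
    (∫ t in (0 : ℝ)..(1 - ε), 1 / Real.log t) + ∫ t in (1 + ε : ℝ)..x, 1 / Real.log t)

/-- The coefficients `a_j = -∫_1^∞ ({t}/t²) (log t)^{j-1} dt`. -/
noncomputable def aCoeff (j : ℕ) : ℝ :=
  -∫ t in Set.Ioi (1 : ℝ), Int.fract t / t ^ 2 * Real.log t ^ (j - 1)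

lemma sumOmega_eq (N : ℕ) :
    ∑ n ∈ Finset.Icc 1 N, smallOmega n = ∑ p ∈ (Finset.Icc 1 N).filter Nat.Prime, N / p := by
  have h1 : ∀ n ∈ Finset.Icc 1 N, smallOmega n =
      ((Finset.Icc 1 N).filter (fun p => p.Prime ∧ p ∣ n)).card := by
    intro n hn
    simp only [Finset.mem_Icc] at hn
    unfold smallOmega
    congr 1
    ext p
    simp only [Nat.mem_primeFactors, Finset.mem_filter, Finset.mem_Icc]
    constructor
    · rintro ⟨hp, hd, hn0⟩
      exact ⟨⟨hp.one_lt.le, (Nat.le_of_dvd (by omega) hd).trans hn.2⟩, hp, hd⟩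
    · rintro ⟨_, hp, hd⟩
      exact ⟨hp, hd, by omega⟩
  rw [Finset.sum_congr rfl h1]
  simp_rw [Finset.card_filter]
  rw [Finset.sum_comm, Finset.sum_filter]
  refine Finset.sum_congr rfl fun p hp => ?_
  by_cases hpp : p.Prime
  · simp only [hpp, true_and, if_true]
    rw [← Finset.card_filter, show Finset.Icc 1 N = Finset.Ioc 0 N from Finset.Icc_add_one_left_eq_Ioc 0 N,
      Nat.Ioc_filter_dvd_card_eq_div]
  · simp [hpp]

lemma primes_Ioc (a b : ℕ) (h : a ≤ b) :
    ((Finset.Ioc a b).filter Nat.Prime).card + Nat.primeCounting a = Nat.primeCounting b := by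
  have hpc : ∀ n, Nat.primeCounting n = ((Finset.range (n+1)).filter Nat.Prime).card := by
    intro n; rw [Nat.primeCounting, Nat.primeCounting', Nat.count_eq_card_filter_range]
  rw [hpc, hpc]
  have hu : Finset.range (b+1) = Finset.range (a+1) ∪ Finset.Ioc a b := by
    ext k; simp only [Finset.mem_range, Finset.mem_union, Finset.mem_Ioc]; omega
  rw [hu, Finset.filter_union, Finset.card_union_of_disjoint, Nat.add_comm]
  refine Finset.disjoint_filter_filter ?_
  simp only [Finset.disjoint_left, Finset.mem_range, Finset.mem_Ioc]
  intro k hk hk2; omega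

lemma hyperbola_nat (x y : ℝ) (hy : 1 ≤ y) (hyx : y ≤ x) :
    ∑ p ∈ (Finset.Icc 1 ⌊x⌋₊).filter Nat.Prime, ⌊x⌋₊ / p =
      ∑ p ∈ (Finset.Icc 1 ⌊y⌋₊).filter Nat.Prime, ⌊x⌋₊ / p +
      ∑ m ∈ Finset.Icc 1 ⌊x/y⌋₊,
        ((Finset.Ioc ⌊y⌋₊ (⌊x⌋₊ / m)).filter Nat.Prime).card := by
  have hy0 : (0:ℝ) < y := lt_of_lt_of_le one_pos hy
  set N := ⌊x⌋₊ with hN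
  set Y := ⌊y⌋₊ with hYdef
  set K := ⌊x/y⌋₊ with hKdef
  have hYN : Y ≤ N := Nat.floor_le_floor hyx
  have hsplit : Finset.Icc 1 N = Finset.Icc 1 Y ∪ Finset.Ioc Y N := by
    ext k; simp only [Finset.mem_Icc, Finset.mem_union, Finset.mem_Ioc]; omega
  have hdisj : Disjoint ((Finset.Icc 1 Y).filter Nat.Prime)
      ((Finset.Ioc Y N).filter Nat.Prime) := by
    refine Finset.disjoint_filter_filter ?_
    simp only [Finset.disjoint_left, Finset.mem_Icc, Finset.mem_Ioc]
    intro k hk hk2; omega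
  rw [hsplit, Finset.filter_union, Finset.sum_union hdisj]
  congr 1
  -- key: ∑_{Y < p ≤ N prime} N/p = ∑_{m ≤ K} #{Y < q ≤ N/m prime}
  have key : ∀ p ∈ (Finset.Ioc Y N).filter Nat.Prime,
      N / p = ((Finset.Icc 1 K).filter (fun m => p * m ≤ N)).card := by
    intro p hp
    simp only [Finset.mem_filter, Finset.mem_Ioc] at hp
    obtain ⟨⟨hYp, hpN⟩, hpp⟩ := hp
    have hp0 : 0 < p := hpp.pos
    have hyp : y < (p : ℝ) := by
      calc y < (Y : ℝ) + 1 := Nat.lt_floor_add_one y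
        _ ≤ p := by exact_mod_cast Nat.succ_le_of_lt hYp
    have : (Finset.Icc 1 K).filter (fun m => p * m ≤ N) = Finset.Icc 1 (N / p) := by
      ext m
      simp only [Finset.mem_filter, Finset.mem_Icc]
      constructor
      · rintro ⟨⟨h1, _⟩, h2⟩
        exact ⟨h1, (Nat.le_div_iff_mul_le hp0).mpr (by rwa [Nat.mul_comm])⟩
      · rintro ⟨h1, h2⟩
        have hmul : m * p ≤ N := (Nat.le_div_iff_mul_le hp0).mp h2
        refine ⟨⟨h1, ?_⟩, by rwa [Nat.mul_comm] at hmul⟩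
        -- m ≤ K since m * y ≤ m * p ≤ N ≤ x
        have hmx : (m : ℝ) * y ≤ x := by
          calc (m : ℝ) * y ≤ (m : ℝ) * p := by
                exact mul_le_mul_of_nonneg_left hyp.le (by positivity)
            _ = ((m * p : ℕ) : ℝ) := by push_cast; ring
            _ ≤ (N : ℝ) := by exact_mod_cast hmul
            _ ≤ x := Nat.floor_le (by linarith)
        exact Nat.le_floor ((le_div_iff₀ hy0).mpr hmx)
    rw [this, Nat.card_Icc, Nat.add_sub_cancel]
  rw [Finset.sum_congr rfl key]
  simp_rw [Finset.card_filter]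
  rw [Finset.sum_comm]
  refine Finset.sum_congr rfl fun m hm => ?_
  simp only [Finset.mem_Icc] at hm
  rw [← Finset.card_filter, Finset.filter_filter]
  have hm0 : 0 < m := hm.1
  have hset : (Finset.Ioc Y N).filter (fun p => Nat.Prime p ∧ p * m ≤ N) =
      (Finset.Ioc Y (N / m)).filter Nat.Prime := by
    ext p
    simp only [Finset.mem_filter, Finset.mem_Ioc]
    constructor
    · rintro ⟨⟨hYp, hpN⟩, hpp, hpm⟩
      exact ⟨⟨hYp, (Nat.le_div_iff_mul_le hm0).mpr hpm⟩, hpp⟩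
    · rintro ⟨⟨hYp, hpd⟩, hpp⟩
      exact ⟨⟨hYp, le_trans hpd (Nat.div_le_self _ _)⟩, hpp,
        (Nat.le_div_iff_mul_le hm0).mp hpd⟩
  rw [hset]
  exact Finset.card_filter _ _

theorem sum_omega_hyperbola (x y : ℝ) (hy : 1 ≤ y) (hyx : y ≤ x) :
    (∑ n ∈ Finset.Icc 1 ⌊x⌋₊, (smallOmega n : ℝ)) =
      (∑ p ∈ Finset.filter Nat.Prime (Finset.Icc 1 ⌊y⌋₊), (⌊x / (p : ℝ)⌋₊ : ℝ)) +
        (∑ n ∈ Finset.Icc 1 ⌊x / y⌋₊, (primePi (x / (n : ℝ)) : ℝ)) -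
        (⌊x / y⌋₊ : ℝ) * (primePi y : ℝ) := by
  have hy0 : (0:ℝ) < y := lt_of_lt_of_le one_pos hy
  have hx0 : (0:ℝ) ≤ x := by linarith
  have hA : (∑ n ∈ Finset.Icc 1 ⌊x⌋₊, (smallOmega n : ℝ)) =
      ∑ p ∈ (Finset.Icc 1 ⌊x⌋₊).filter Nat.Prime, ((⌊x⌋₊ / p : ℕ) : ℝ) := by
    rw [← Nat.cast_sum, ← Nat.cast_sum, sumOmega_eq]
  have hBc : (∑ p ∈ (Finset.Icc 1 ⌊x⌋₊).filter Nat.Prime, ((⌊x⌋₊ / p : ℕ) : ℝ)) =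
      ∑ p ∈ (Finset.Icc 1 ⌊y⌋₊).filter Nat.Prime, ((⌊x⌋₊ / p : ℕ) : ℝ) +
      ∑ m ∈ Finset.Icc 1 ⌊x/y⌋₊,
        (((Finset.Ioc ⌊y⌋₊ (⌊x⌋₊ / m)).filter Nat.Prime).card : ℝ) := by
    rw [← Nat.cast_sum, ← Nat.cast_sum, ← Nat.cast_sum, hyperbola_nat x y hy hyx]
    push_cast; ring
  rw [hA, hBc]
  have h1 : ∑ p ∈ (Finset.Icc 1 ⌊y⌋₊).filter Nat.Prime, ((⌊x⌋₊ / p : ℕ) : ℝ) =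
      ∑ p ∈ Finset.filter Nat.Prime (Finset.Icc 1 ⌊y⌋₊), (⌊x / (p : ℝ)⌋₊ : ℝ) := by
    refine Finset.sum_congr rfl fun p hp => ?_
    rw [Nat.floor_div_natCast]
  have h2 : ∀ m ∈ Finset.Icc 1 ⌊x/y⌋₊,
      (((Finset.Ioc ⌊y⌋₊ (⌊x⌋₊ / m)).filter Nat.Prime).card : ℝ) =
      (primePi (x / (m : ℝ)) : ℝ) - (primePi y : ℝ) := by
    intro m hm
    simp only [Finset.mem_Icc] at hm
    have hm0 : (0:ℝ) < m := by exact_mod_cast hm.1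
    have hmxy : (m : ℝ) ≤ x / y := le_trans (Nat.cast_le.mpr hm.2) (Nat.floor_le (by positivity))
    have hyxm : y ≤ x / m := by
      rw [le_div_iff₀ hm0]
      rw [le_div_iff₀ hy0] at hmxy
      linarith [hmxy]
    have hYle : ⌊y⌋₊ ≤ ⌊x⌋₊ / m := by
      rw [← Nat.floor_div_natCast]
      exact Nat.floor_le_floor hyxm
    have := primes_Ioc ⌊y⌋₊ (⌊x⌋₊ / m) hYle
    have hcast : (((Finset.Ioc ⌊y⌋₊ (⌊x⌋₊ / m)).filter Nat.Prime).card : ℝ)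
        + (Nat.primeCounting ⌊y⌋₊ : ℝ) = (Nat.primeCounting (⌊x⌋₊ / m) : ℝ) := by
      exact_mod_cast congrArg (Nat.cast : ℕ → ℝ) this
    unfold primePi
    rw [Nat.floor_div_natCast]
    linarith [hcast]
  rw [Finset.sum_congr rfl h2, Finset.sum_sub_distrib, Finset.sum_const, h1]
  rw [Nat.card_Icc, Nat.add_sub_cancel]
  ring
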